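/- Let H : (0,∞) → (0,∞) be differentiable and N : (0,∞) → ℝ with N(r) ≤ d for all r ∈ (0,R], and suppose (d/dr) log H(r) ≤ 2d/r + (1/(1-a)) N'(r) on (0,R], where N is absolutely continuous, N ≥ 0. Then for all 0 < r₁ ≤ r₂ ≤ R, H(r₂)/H(r₁) ≤ e^{d/(1-a)} (r₂/r₁)^{2d}. -/

import Mathlib

/-- Doubling property: if `N ≤ d` on `(0,R]`, `N ≥ 0`, and
`(log H)' ≤ 2d/r + (1/(1-a)) N'` on `(0,R]`, then for `0 < r₁ ≤ r₂ ≤ R`,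
`H(r₂)/H(r₁) ≤ e^{d/(1-a)} (r₂/r₁)^{2d}`. -/
theorem stmt7 (a d R : ℝ) (ha : a ∈ Set.Ioo (-1 : ℝ) 1) (hd : 0 < d) (hR : 0 < R)
    (H H' N N' : ℝ → ℝ)
    (hHpos : ∀ r ∈ Set.Ioc 0 R, 0 < H r)
    (hH : ∀ r ∈ Set.Ioc 0 R, HasDerivAt H (H' r) r)
    (hN : ∀ r ∈ Set.Ioc 0 R, HasDerivAt N (N' r) r)
    (hNle : ∀ r ∈ Set.Ioc 0 R, N r ≤ d)
    (hNnonneg : ∀ r ∈ Set.Ioc 0 R, 0 ≤ N r)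
    (hineq : ∀ r ∈ Set.Ioc 0 R, H' r / H r ≤ 2 * d / r + (1 / (1 - a)) * N' r) :
    ∀ r₁ r₂ : ℝ, 0 < r₁ → r₁ ≤ r₂ → r₂ ≤ R →
      H r₂ / H r₁ ≤ Real.exp (d / (1 - a)) * (r₂ / r₁) ^ (2 * d) := by
  intro r₁ r₂ hr₁ h12 h2R
  have ha' : (0:ℝ) < 1 - a := by linarith [ha.2]
  set F : ℝ → ℝ := fun r => Real.log (H r) - 2 * d * Real.log r - (1 / (1 - a)) * N r
    with hF
  have hFderiv : ∀ r ∈ Set.Ioc (0:ℝ) R,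
      HasDerivAt F (H' r / H r - 2 * d / r - (1 / (1 - a)) * N' r) r := by
    intro r hr
    have h1 : HasDerivAt (fun r => Real.log (H r)) (H' r / H r) r :=
      (hH r hr).log (hHpos r hr).ne'
    have h2 : HasDerivAt (fun r => 2 * d * Real.log r) (2 * d * r⁻¹) r :=
      (Real.hasDerivAt_log hr.1.ne').const_mul (2 * d)
    have h3 : HasDerivAt (fun r => (1 / (1 - a)) * N r) ((1 / (1 - a)) * N' r) r :=
      (hN r hr).const_mul _
    have := (h1.sub h2).sub h3
    rw [div_eq_mul_inv (2 * d) r]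
    exact this
  have hsub : Set.Icc r₁ r₂ ⊆ Set.Ioc 0 R := fun x hx =>
    ⟨lt_of_lt_of_le hr₁ hx.1, le_trans hx.2 h2R⟩
  have hanti : AntitoneOn F (Set.Icc r₁ r₂) := by
    apply antitoneOn_of_deriv_nonpos (convex_Icc _ _)
    · intro x hx
      exact (hFderiv x (hsub hx)).continuousAt.continuousWithinAt
    · intro x hx
      rw [interior_Icc] at hx
      exact ((hFderiv x (hsub (Set.mem_Icc_of_Ioo hx))).differentiableAt.differentiableWithinAt)
    · intro x hx
      rw [interior_Icc] at hx
      have hx' := hsub (Set.mem_Icc_of_Ioo hx)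
      rw [(hFderiv x hx').deriv]
      have := hineq x hx'
      linarith
  have hFle : F r₂ ≤ F r₁ := hanti (Set.left_mem_Icc.mpr h12) (Set.right_mem_Icc.mpr h12) h12
  have hr1m : r₁ ∈ Set.Ioc (0:ℝ) R := ⟨hr₁, le_trans h12 h2R⟩
  have hr2m : r₂ ∈ Set.Ioc (0:ℝ) R := ⟨lt_of_lt_of_le hr₁ h12, h2R⟩
  have hH1 := hHpos r₁ hr1m
  have hH2 := hHpos r₂ hr2m
  have hNd : N r₂ - N r₁ ≤ d := by
    have := hNle r₂ hr2m; have := hNnonneg r₁ hr1m; linarith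
  have hlog : Real.log (H r₂) - Real.log (H r₁) ≤
      d / (1 - a) + 2 * d * (Real.log r₂ - Real.log r₁) := by
    simp only [hF] at hFle
    have h1 : (1 / (1 - a)) * (N r₂ - N r₁) ≤ (1 / (1 - a)) * d := by
      apply mul_le_mul_of_nonneg_left hNd
      positivity
    have : d / (1 - a) = (1 / (1 - a)) * d := by ring
    nlinarith
  have hr2pos : 0 < r₂ / r₁ := div_pos hr2m.1 hr₁
  calc H r₂ / H r₁ = Real.exp (Real.log (H r₂) - Real.log (H r₁)) := by
        rw [Real.exp_sub, Real.exp_log hH2, Real.exp_log hH1]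
    _ ≤ Real.exp (d / (1 - a) + 2 * d * (Real.log r₂ - Real.log r₁)) :=
        Real.exp_le_exp.mpr hlog
    _ = Real.exp (d / (1 - a)) * (r₂ / r₁) ^ (2 * d) := by
        rw [Real.exp_add, Real.rpow_def_of_pos hr2pos,
          Real.log_div hr2m.1.ne' hr₁.ne']
        ring_nf
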